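/- For any W ∈ ℝ^n, any α ∈ ℝ, and any T ∈ {-1,0,1}^n with sparsity k ≥ 1, one has ‖αT − W‖² ≥ ‖W‖² − ‖W_[k]‖₁²/k, where ‖W_[k]‖₁ is the sum of the k largest absolute values of entries of W. -/

import Mathlib

open Finset

/-- Sum of the `k` largest absolute values of entries of `W`:
the supremum over all subsets of cardinality `k` of the sum of `|W i|`. -/
noncomputable def sumTopK {n : ℕ} (W : Fin n → ℝ) (k : ℕ) : ℝ :=
  sSup ((fun s : Finset (Fin n) => ∑ i ∈ s, |W i|) '' {s : Finset (Fin n) | s.card = k})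

/-- A ternary vector takes values in `{-1, 0, 1}`. -/
def IsTernary {n : ℕ} (T : Fin n → ℝ) : Prop := ∀ i, T i = -1 ∨ T i = 0 ∨ T i = 1

/-- `max_{1 ≤ k ≤ n} ‖W_[k]‖₁² / k`. -/
noncomputable def maxRatio {n : ℕ} (W : Fin n → ℝ) : ℝ :=
  sSup {x : ℝ | ∃ k : ℕ, 1 ≤ k ∧ k ≤ n ∧ x = (sumTopK W k)^2 / (k : ℝ)}

theorem stmt2 {n : ℕ} (W : Fin n → ℝ) (α : ℝ) (T : Fin n → ℝ) (hT : IsTernary T)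
    (k : ℕ) (hk : (Finset.univ.filter fun i => T i ≠ 0).card = k) (hk1 : 1 ≤ k) :
    (∑ i, (W i)^2) - (sumTopK W k)^2 / (k : ℝ) ≤ ∑ i, (α * T i - W i)^2 := by
  set S : Finset (Fin n) := Finset.univ.filter fun i => T i ≠ 0 with hS
  set M : ℝ := sumTopK W k with hMdef
  set P : ℝ := ∑ i, T i * W i with hPdef
  -- sum over S of |W| is ≤ M
  have hbdd : BddAbove ((fun s : Finset (Fin n) => ∑ i ∈ s, |W i|) ''
      {s : Finset (Fin n) | s.card = k}) :=
    (Set.toFinite _).bddAbove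
  have hSM : ∑ i ∈ S, |W i| ≤ M := le_csSup hbdd ⟨S, hk, rfl⟩
  -- P restricted to S
  have hPS : P = ∑ i ∈ S, T i * W i := by
    rw [hPdef]
    refine (Finset.sum_filter_of_ne ?_).symm
    intro i _ h hTi
    exact h (by simp [hTi])
  have hTabs : ∀ i, |T i| ≤ 1 := by
    intro i; rcases hT i with h | h | h <;> simp [h]
  have hPabs : |P| ≤ M := by
    calc |P| ≤ ∑ i ∈ S, |T i * W i| := by rw [hPS]; exact Finset.abs_sum_le_sum_abs _ _
    _ ≤ ∑ i ∈ S, |W i| := by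
        refine Finset.sum_le_sum fun i _ => ?_
        rw [abs_mul]
        calc |T i| * |W i| ≤ 1 * |W i| := by
              exact mul_le_mul_of_nonneg_right (hTabs i) (abs_nonneg _)
        _ = |W i| := one_mul _
    _ ≤ M := hSM
  -- sum of T² is k
  have hT2 : ∑ i, (T i)^2 = (k : ℝ) := by
    have h1 : ∀ i : Fin n, (T i)^2 = if T i ≠ 0 then (1:ℝ) else 0 := by
      intro i; rcases hT i with h | h | h <;> simp [h]
    calc ∑ i, (T i)^2 = ∑ i, if T i ≠ 0 then (1:ℝ) else 0 :=
          Finset.sum_congr rfl fun i _ => h1 i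
    _ = ∑ _i ∈ S, (1:ℝ) := (Finset.sum_filter _ _).symm
    _ = (k : ℝ) := by simp [hk]
  have hexp : ∑ i, (α * T i - W i)^2
      = α^2 * (∑ i, (T i)^2) - 2 * α * P + ∑ i, (W i)^2 := by
    rw [hPdef, Finset.mul_sum, Finset.mul_sum, ← Finset.sum_sub_distrib,
      ← Finset.sum_add_distrib]
    exact Finset.sum_congr rfl fun i _ => by ring
  rw [hexp, hT2]
  have hkpos : (0:ℝ) < (k:ℝ) := by exact_mod_cast hk1
  have key : (0:ℝ) ≤ α^2 * (k:ℝ)^2 - 2 * α * P * (k:ℝ) + M^2 := by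
    nlinarith [sq_nonneg (α * (k:ℝ) - P), sq_abs P, abs_nonneg P, sq_nonneg (|P| + M)]
  have h1 : (0:ℝ) ≤ α^2 * (k:ℝ) - 2 * α * P + M^2 / (k:ℝ) := by
    have heq : α^2 * (k:ℝ) - 2 * α * P + M^2 / (k:ℝ)
        = (α^2 * (k:ℝ)^2 - 2 * α * P * (k:ℝ) + M^2) / (k:ℝ) := by
      field_simp
    rw [heq]
    exact div_nonneg key hkpos.le
  linarith
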